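/- Let n ≥ 1 and K ≥ 1 be integers, and let γ > 0, L > 0, σ² ≥ 0, B > 0, F_* ∈ ℝ be reals with γ ≤ 1/(8nL). Let F : ℕ → ℝ satisfy F_k ≥ F_* for all k, and let a, G, R : ℕ → ℝ be nonnegative sequences such that: (i) for all k with 0 ≤ k ≤ K−1, F_{k+1} ≤ F_k − (γ/2) a_k − (γ/4) G_k + (γL²/2) R_k + 3γ²Lσ²/(2B) + γ²L ∑_{ℓ = k − (k mod n)}^{k−1} G_ℓ; and (ii) (1/K) ∑_{k=0}^{K−1} R_k ≤ (2γn/(LK)) ∑_{k=0}^{K−1} G_k + 2γσ²/(LB). Then (1/K) ∑_{k=0}^{K−1} a_k ≤ 2(F_0 − F_*)/(γK) + 5γLσ²/B. -/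

import Mathlib

open scoped BigOperators

/-- Abstract convergence argument for delay-controlled asynchronous SGD:
combining the descent inequality (i) and residual bound (ii) yields
`(1/K)∑ a_k ≤ 2(F_0 − F_*)/(γK) + 5γLσ²/B`. -/
theorem abstract_convergence
    (n K : ℕ) (hn : 1 ≤ n) (hK : 1 ≤ K)
    (γ L σ2 B Fstar : ℝ) (hγ : 0 < γ) (hL : 0 < L) (hσ : 0 ≤ σ2) (hB : 0 < B)
    (hγle : γ ≤ 1 / (8 * n * L))
    (F a G R : ℕ → ℝ)
    (hF : ∀ k, Fstar ≤ F k)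
    (ha : ∀ k, 0 ≤ a k) (hG : ∀ k, 0 ≤ G k) (hR : ∀ k, 0 ≤ R k)
    (hdesc : ∀ k, k ≤ K - 1 →
      F (k + 1) ≤ F k - (γ / 2) * a k - (γ / 4) * G k + (γ * L ^ 2 / 2) * R k
        + 3 * γ ^ 2 * L * σ2 / (2 * B)
        + γ ^ 2 * L * ∑ ℓ ∈ Finset.Ico (k - k % n) k, G ℓ)
    (hres : (1 / (K : ℝ)) * ∑ k ∈ Finset.range K, R k
      ≤ (2 * γ * n / (L * K)) * ∑ k ∈ Finset.range K, G k
        + 2 * γ * σ2 / (L * B)) :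
    (1 / (K : ℝ)) * ∑ k ∈ Finset.range K, a k
      ≤ 2 * (F 0 - Fstar) / (γ * K) + 5 * γ * L * σ2 / B := by
  have hKpos : (0:ℝ) < K := by exact_mod_cast hK
  have hnpos : (0:ℝ) < n := by exact_mod_cast hn
  set Sa := ∑ k ∈ Finset.range K, a k with hSa
  set SG := ∑ k ∈ Finset.range K, G k with hSG
  set SR := ∑ k ∈ Finset.range K, R k with hSR
  set T := ∑ k ∈ Finset.range K, ∑ ℓ ∈ Finset.Ico (k - k % n) k, G ℓ with hT
  have hSGnn : 0 ≤ SG := Finset.sum_nonneg fun k _ => hG k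
  have hSann : 0 ≤ Sa := Finset.sum_nonneg fun k _ => ha k
  -- double sum bound
  have hdouble : T ≤ (n : ℝ) * SG := by
    have h1 : ∀ k ∈ Finset.range K,
        ∑ ℓ ∈ Finset.Ico (k - k % n) k, G ℓ
          = ∑ ℓ ∈ Finset.range K, if ℓ ∈ Finset.Ico (k - k % n) k then G ℓ else 0 := by
      intro k hk
      rw [Finset.sum_ite_mem]
      congr 1
      refine (Finset.inter_eq_right.mpr ?_).symm
      intro ℓ hℓ
      simp only [Finset.mem_Ico] at hℓ
      simp only [Finset.mem_range] at hk ⊢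
      omega
    rw [hT, Finset.sum_congr rfl h1, Finset.sum_comm, hSG, Finset.mul_sum]
    apply Finset.sum_le_sum
    intro ℓ _
    rw [← Finset.sum_filter, Finset.sum_const, nsmul_eq_mul]
    have hcard : ((Finset.range K).filter (fun k => ℓ ∈ Finset.Ico (k - k % n) k)).card ≤ n := by
      have hsub : ((Finset.range K).filter (fun k => ℓ ∈ Finset.Ico (k - k % n) k))
          ⊆ Finset.Ico (ℓ + 1) (ℓ + n) := by
        intro k hk
        simp only [Finset.mem_filter, Finset.mem_range, Finset.mem_Ico] at hk ⊢
        have hmlt : k % n < n := Nat.mod_lt _ (by omega)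
        have hmle : k % n ≤ k := Nat.mod_le k n
        obtain ⟨hkK, hlo, hhi⟩ := hk
        have hkeq : (k - k % n) + k % n = k := Nat.sub_add_cancel hmle
        constructor
        · omega
        · omega
      calc _ ≤ (Finset.Ico (ℓ + 1) (ℓ + n)).card := Finset.card_le_card hsub
        _ ≤ n := by rw [Nat.card_Ico]; omega
    have : ((((Finset.range K).filter (fun k => ℓ ∈ Finset.Ico (k - k % n) k)).card : ℝ))
        ≤ (n : ℝ) := by exact_mod_cast hcard
    exact mul_le_mul_of_nonneg_right this (hG ℓ)
  -- telescoping
  have htel : ∀ m, m ≤ K → F m ≤ F 0 + ∑ k ∈ Finset.range m,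
      (- (γ / 2) * a k - (γ / 4) * G k + (γ * L ^ 2 / 2) * R k
        + 3 * γ ^ 2 * L * σ2 / (2 * B)
        + γ ^ 2 * L * ∑ ℓ ∈ Finset.Ico (k - k % n) k, G ℓ) := by
    intro m hm
    induction m with
    | zero => simp
    | succ m ih =>
      have hdm := hdesc m (by omega)
      have ihm := ih (by omega)
      rw [Finset.sum_range_succ]
      linarith
  have hsplit : ∑ k ∈ Finset.range K,
      (- (γ / 2) * a k - (γ / 4) * G k + (γ * L ^ 2 / 2) * R k
        + 3 * γ ^ 2 * L * σ2 / (2 * B)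
        + γ ^ 2 * L * ∑ ℓ ∈ Finset.Ico (k - k % n) k, G ℓ)
      = - (γ / 2) * Sa - (γ / 4) * SG + (γ * L ^ 2 / 2) * SR
        + (K : ℝ) * (3 * γ ^ 2 * L * σ2 / (2 * B)) + γ ^ 2 * L * T := by
    rw [hSa, hSG, hSR, hT]
    simp only [Finset.sum_add_distrib, Finset.sum_sub_distrib, ← Finset.mul_sum,
      Finset.sum_const, Finset.card_range, nsmul_eq_mul]
  have hmain : Fstar ≤ F 0 - (γ / 2) * Sa - (γ / 4) * SG + (γ * L ^ 2 / 2) * SR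
      + (K : ℝ) * (3 * γ ^ 2 * L * σ2 / (2 * B)) + γ ^ 2 * L * T := by
    have := htel K le_rfl
    rw [hsplit] at this
    have := hF K
    linarith
  -- residual bound times K
  have hres2 : SR ≤ (2 * γ * n / L) * SG + 2 * γ * σ2 * K / (L * B) := by
    have h := mul_le_mul_of_nonneg_left hres hKpos.le
    have e1 : (K : ℝ) * ((1 / K) * SR) = SR := by field_simp
    have e2 : (K : ℝ) * ((2 * γ * n / (L * K)) * SG + 2 * γ * σ2 / (L * B))
        = (2 * γ * n / L) * SG + 2 * γ * σ2 * K / (L * B) := by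
      field_simp
    rw [e1, e2] at h
    exact h
  -- combine
  have hSRcoef : (γ * L ^ 2 / 2) * SR ≤ γ ^ 2 * L * n * SG + γ ^ 2 * L * σ2 * K / B := by
    have h := mul_le_mul_of_nonneg_left hres2 (by positivity : (0:ℝ) ≤ γ * L ^ 2 / 2)
    have e : (γ * L ^ 2 / 2) * ((2 * γ * n / L) * SG + 2 * γ * σ2 * K / (L * B))
        = γ ^ 2 * L * n * SG + γ ^ 2 * L * σ2 * K / B := by
      field_simp
    rw [e] at h
    exact h
  have hTcoef : γ ^ 2 * L * T ≤ γ ^ 2 * L * n * SG := by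
    have := mul_le_mul_of_nonneg_left hdouble (by positivity : (0:ℝ) ≤ γ ^ 2 * L)
    linarith [this]
  have hsmall : 2 * (γ ^ 2 * L * n) ≤ γ / 4 := by
    have h8 : (0:ℝ) < 8 * n * L := by positivity
    have := (le_div_iff₀ h8).mp hγle  -- γ * (8nL) ≤ 1
    nlinarith
  have hGterm : 2 * (γ ^ 2 * L * n) * SG ≤ (γ / 4) * SG :=
    mul_le_mul_of_nonneg_right hsmall hSGnn
  have hconst : (K : ℝ) * (3 * γ ^ 2 * L * σ2 / (2 * B)) + γ ^ 2 * L * σ2 * K / B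
      = (5 / 2) * K * γ ^ 2 * L * σ2 / B := by field_simp; ring
  have hfinal : (γ / 2) * Sa ≤ (F 0 - Fstar) + (5 / 2) * K * γ ^ 2 * L * σ2 / B := by
    linarith [hmain, hSRcoef, hTcoef, hGterm, hconst]
  -- conclude
  rw [← mul_le_mul_iff_right₀ (show (0:ℝ) < γ * K / 2 by positivity)]
  have lhs_eq : (γ * K / 2) * ((1 / K) * Sa) = (γ / 2) * Sa := by field_simp
  have rhs_eq : (γ * K / 2) * (2 * (F 0 - Fstar) / (γ * K) + 5 * γ * L * σ2 / B)
      = (F 0 - Fstar) + (5 / 2) * K * γ ^ 2 * L * σ2 / B := by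
    field_simp
  rw [lhs_eq, rhs_eq]
  exact hfinal
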